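/- Let K ≥ 1 and N ≥ 1 be integers and p ∈ [0,1]. For each file index i ∈ {1,…,N} and each subset J ⊆ {1,…,K}, let W_{i|J} be a finite-valued random variable on a common probability space, and assume the whole family (W_{i|J})_{i∈[N], J⊆[K]} is mutually independent. Set W_i = (W_{i|J})_{J⊆[K]} and define the cache content of user k by Z_k = (W_{i|J})_{i∈[N], J ∋ k}. Assume that for every i and every J ⊆ {1,…,K}, H[W_{i|J}] = p^{|J|}(1−p)^{K−|J|} · H[W_i]. Then for every set 𝒦 ⊆ {1,…,K} and every i ∈ {1,…,N}: H[ W_i | (Z_k)_{k∈𝒦} ] = (1−p)^{|𝒦|} · H[W_i]. -/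

import Mathlib

open MeasureTheory ProbabilityTheory

/-- Shannon entropy (in nats) of a finite-valued random variable. -/
noncomputable def entropy {Ω : Type*} [MeasurableSpace Ω] (μ : Measure Ω)
    {α : Type*} [Fintype α] (X : Ω → α) : ℝ :=
  ∑ x : α, Real.negMulLog (μ (X ⁻¹' {x})).toReal

/-- Shannon conditional entropy `H[X | Y] = H[(X,Y)] - H[Y]` of finite-valued
random variables. -/
noncomputable def condEntropy {Ω : Type*} [MeasurableSpace Ω] (μ : Measure Ω)
    {α β : Type*} [Fintype α] [Fintype β] (X : Ω → α) (Y : Ω → β) : ℝ :=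
  entropy μ (fun ω => (X ω, Y ω)) - entropy μ Y

lemma negMulLog_prod' {ι : Type*} [DecidableEq ι] (s : Finset ι) (c : ι → ℝ) :
    Real.negMulLog (∏ j ∈ s, c j)
      = ∑ i ∈ s, (∏ j ∈ s.erase i, c j) * Real.negMulLog (c i) := by
  induction s using Finset.induction_on with
  | empty => simp
  | @insert a s ha ih =>
    rw [Finset.prod_insert ha, Real.negMulLog_mul, ih, Finset.sum_insert ha,
      Finset.erase_insert ha, Finset.mul_sum]
    congr 1
    refine Finset.sum_congr rfl fun i hi => ?_
    rw [Finset.erase_insert_of_ne (fun h : a = i => ha (h.symm ▸ hi)),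
      Finset.prod_insert (fun h => ha (Finset.mem_of_mem_erase h))]
    ring

lemma sum_negMulLog_prod {ι : Type*} [Fintype ι] [DecidableEq ι] {α : ι → Type*}
    [∀ i, Fintype (α i)] (q : ∀ i, α i → ℝ) (hq1 : ∀ i, ∑ a, q i a = 1) :
    ∑ x : (∀ i, α i), Real.negMulLog (∏ i, q i (x i))
      = ∑ i, ∑ a, Real.negMulLog (q i a) := by
  set F : ∀ (_ : ι) (j : ι), α j → ℝ :=
    fun i j a => if j = i then Real.negMulLog (q j a) else q j a with hF
  have key : ∀ x : (∀ i, α i), Real.negMulLog (∏ i, q i (x i))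
      = ∑ i, ∏ j, F i j (x j) := by
    intro x
    rw [negMulLog_prod']
    refine Finset.sum_congr rfl fun i _ => ?_
    rw [← Finset.mul_prod_erase Finset.univ _ (Finset.mem_univ i)]
    have h1 : F i i (x i) = Real.negMulLog (q i (x i)) := by simp [hF]
    have h2 : ∏ j ∈ Finset.univ.erase i, F i j (x j)
        = ∏ j ∈ Finset.univ.erase i, q j (x j) :=
      Finset.prod_congr rfl fun j hj => by simp [hF, Finset.ne_of_mem_erase hj]
    rw [h1, h2]; ring
  rw [Finset.sum_congr rfl fun x _ => key x, Finset.sum_comm]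
  refine Finset.sum_congr rfl fun i _ => ?_
  have : ∑ x : (∀ i, α i), ∏ j, F i j (x j) = ∏ j, ∑ a, F i j a := by
    rw [Finset.prod_univ_sum]
    rw [← Fintype.piFinset_univ]
  rw [this]
  rw [Finset.prod_eq_single i (fun j _ hj => by simp [hF, hj, hq1 j]) (by simp)]
  simp [hF]

lemma sum_toReal_meas_preimage_singleton {Ω : Type*} [MeasurableSpace Ω] (μ : Measure Ω)
    [IsProbabilityMeasure μ] {α : Type*} [Fintype α] [MeasurableSpace α]
    [MeasurableSingletonClass α] (X : Ω → α) (hX : Measurable X) :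
    ∑ a : α, (μ (X ⁻¹' {a})).toReal = 1 := by
  have h := sum_measure_preimage_singleton (μ := μ) (f := X) Finset.univ
    (fun a _ => hX (measurableSet_singleton a))
  rw [← ENNReal.toReal_sum (fun a _ => measure_ne_top μ _), h]
  simp

lemma entropy_pi_of_prod {Ω : Type*} [MeasurableSpace Ω] (μ : Measure Ω)
    [IsProbabilityMeasure μ] {ι : Type*} [Fintype ι] [DecidableEq ι] {α : ι → Type*}
    [∀ i, Fintype (α i)] [∀ i, MeasurableSpace (α i)] [∀ i, MeasurableSingletonClass (α i)]
    (X : ∀ i, Ω → α i) (hmeas : ∀ i, Measurable (X i))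
    (hprod : ∀ x : ∀ i, α i,
      μ ((fun ω => fun i => X i ω) ⁻¹' {x}) = ∏ i, μ (X i ⁻¹' {x i})) :
    entropy μ (fun ω => fun i => X i ω) = ∑ i, entropy μ (X i) := by
  unfold entropy
  calc ∑ x : ∀ i, α i, Real.negMulLog (μ ((fun ω => fun i => X i ω) ⁻¹' {x})).toReal
      = ∑ x : ∀ i, α i, Real.negMulLog (∏ i, (μ (X i ⁻¹' {x i})).toReal) := by
        refine Finset.sum_congr rfl fun x _ => ?_
        rw [hprod x, ENNReal.toReal_prod]
    _ = ∑ i, ∑ a, Real.negMulLog ((μ (X i ⁻¹' {a})).toReal) :=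
        sum_negMulLog_prod _ (fun i => sum_toReal_meas_preimage_singleton μ (X i) (hmeas i))

lemma entropy_comp_injective {Ω : Type*} [MeasurableSpace Ω] (μ : Measure Ω)
    {α β : Type*} [Fintype α] [Fintype β] (X : Ω → α) (f : α → β)
    (hf : Function.Injective f) :
    entropy μ (fun ω => f (X ω)) = entropy μ X := by
  classical
  unfold entropy
  rw [← Finset.sum_subset (Finset.subset_univ (Finset.univ.image f))]
  · rw [Finset.sum_image (fun a _ b _ h => hf h)]
    refine Finset.sum_congr rfl fun x _ => ?_
    have : (fun ω => f (X ω)) ⁻¹' {f x} = X ⁻¹' {x} := by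
      ext ω; simp [hf.eq_iff]
    rw [this]
  · intro y _ hy
    simp only [Finset.mem_image, Finset.mem_univ, true_and, not_exists] at hy
    have : (fun ω => f (X ω)) ⁻¹' {y} = ∅ := by
      ext ω; simp only [Set.mem_preimage, Set.mem_singleton_iff, Set.mem_empty_iff_false,
        iff_false]
      exact fun h => hy (X ω) h
    simp [this]

lemma entropy_restrict {Ω : Type*} [MeasurableSpace Ω] (μ : Measure Ω)
    [IsProbabilityMeasure μ] {ι : Type*} [Fintype ι] [DecidableEq ι] {α : ι → Type*}
    [∀ i, Fintype (α i)] [∀ i, MeasurableSpace (α i)] [∀ i, MeasurableSingletonClass (α i)]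
    (X : ∀ i, Ω → α i) (hmeas : ∀ i, Measurable (X i))
    (hindep : iIndepFun X μ) (Q : ι → Prop) [DecidablePred Q] :
    entropy μ (fun ω => fun j : Subtype Q => X j.1 ω)
      = ∑ j ∈ Finset.univ.filter Q, entropy μ (X j) := by
  have hs : ∑ j ∈ Finset.univ.filter Q, entropy μ (X j)
      = ∑ j : Subtype Q, entropy μ (X j.1) :=
    Finset.sum_subtype _ (fun x => by simp) _
  rw [hs]
  refine entropy_pi_of_prod μ (fun j : Subtype Q => X j.1) (fun j => hmeas j.1) ?_
  intro x
  classical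
  set sets : ι → Set Ω := fun i =>
    if h : Q i then X i ⁻¹' {x ⟨i, h⟩} else Set.univ with hsets
  have hpre : (fun ω => fun j : Subtype Q => X j.1 ω) ⁻¹' {x}
      = ⋂ i ∈ Finset.univ.filter Q, sets i := by
    ext ω
    simp only [Set.mem_preimage, Set.mem_singleton_iff, funext_iff, Set.mem_iInter,
      Finset.mem_filter, Finset.mem_univ, true_and, hsets]
    constructor
    · intro h i hi
      rw [dif_pos hi]
      exact h ⟨i, hi⟩
    · intro h j
      have := h j.1 j.2
      rwa [dif_pos j.2] at this
  have hmeasQ : ∀ i ∈ Finset.univ.filter Q,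
      MeasurableSet[(inferInstance : MeasurableSpace (α i)).comap (X i)] (sets i) := by
    intro i hi
    rw [Finset.mem_filter] at hi
    refine ⟨{x ⟨i, hi.2⟩}, measurableSet_singleton _, ?_⟩
    rw [hsets]; simp [dif_pos hi.2]
  have hp : ∏ i ∈ Finset.univ.filter Q, μ (sets i)
      = ∏ j : Subtype Q, μ (sets j.1) :=
    Finset.prod_subtype _ (fun x => by simp) _
  rw [hpre, hindep.meas_biInter hmeasQ, hp]
  refine Finset.prod_congr rfl fun j _ => ?_
  rw [hsets]
  simp [dif_pos j.2]

lemma sum_powerset_coeff {K : ℕ} (p : ℝ) (𝒦 : Finset (Fin K)) :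
    ∑ J ∈ Finset.univ.filter (fun J : Finset (Fin K) => ∀ k ∈ 𝒦, k ∉ J),
      p ^ J.card * (1 - p) ^ (K - J.card) = (1 - p) ^ 𝒦.card := by
  have hfil : Finset.univ.filter (fun J : Finset (Fin K) => ∀ k ∈ 𝒦, k ∉ J)
      = 𝒦ᶜ.powerset := by
    ext J
    simp only [Finset.mem_filter, Finset.mem_univ, true_and, Finset.mem_powerset,
      Finset.subset_iff, Finset.mem_compl]
    tauto
  rw [hfil]
  have hcard : 𝒦.card + 𝒦ᶜ.card = K := by
    rw [Finset.card_add_card_compl]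
    simp
  have key : ∑ J ∈ 𝒦ᶜ.powerset, p ^ J.card * (1 - p) ^ (𝒦ᶜ.card - J.card) = 1 := by
    have := Finset.prod_add (fun _ : Fin K => p) (fun _ => 1 - p) 𝒦ᶜ
    simp only [add_sub_cancel, Finset.prod_const, one_pow] at this
    refine Eq.trans (Finset.sum_congr rfl fun J hJ => ?_) this.symm
    rw [Finset.mem_powerset] at hJ
    rw [Finset.card_sdiff_of_subset hJ]
  calc ∑ J ∈ 𝒦ᶜ.powerset, p ^ J.card * (1 - p) ^ (K - J.card)
      = ∑ J ∈ 𝒦ᶜ.powerset, (1 - p) ^ 𝒦.card * (p ^ J.card * (1 - p) ^ (𝒦ᶜ.card - J.card)) := by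
        refine Finset.sum_congr rfl fun J hJ => ?_
        rw [Finset.mem_powerset] at hJ
        have hle : J.card ≤ 𝒦ᶜ.card := Finset.card_le_card hJ
        have : K - J.card = 𝒦.card + (𝒦ᶜ.card - J.card) := by omega
        rw [this, pow_add]
        ring
    _ = (1 - p) ^ 𝒦.card := by rw [← Finset.mul_sum, key, mul_one]

set_option maxHeartbeats 1000000 in
/-- **Lemma 2 of the paper.** Under decentralized cache placement,
each file `W_i` is the tuple of mutually independent sub-files `W_{i|J}`, the
sub-file indexed by `J` carrying a fraction `p^|J|(1-p)^(K-|J|)` of the entropy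
of `W_i`, and user `k`'s cache is `Z_k = (W_{i|J})_{i, J ∋ k}`.  Then
`H[W_i | (Z_k)_{k∈𝒦}] = (1-p)^|𝒦| H[W_i]`. -/
theorem condEntropy_file_given_caches {Ω : Type*} [MeasurableSpace Ω] (μ : Measure Ω)
    [IsProbabilityMeasure μ] (K N : ℕ) (hK : 1 ≤ K) (hN : 1 ≤ N)
    (p : ℝ) (hp0 : 0 ≤ p) (hp1 : p ≤ 1)
    (V : Fin N → Finset (Fin K) → Type*)
    [∀ i J, Fintype (V i J)] [∀ i J, MeasurableSpace (V i J)]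
    [∀ i J, MeasurableSingletonClass (V i J)]
    (W : ∀ i J, Ω → V i J) (hWmeas : ∀ i J, Measurable (W i J))
    (hindep : iIndepFun
      (fun (iJ : Fin N × Finset (Fin K)) => W iJ.1 iJ.2) μ)
    (hsize : ∀ i J, entropy μ (W i J)
      = p ^ J.card * (1 - p) ^ (K - J.card) * entropy μ (fun ω => fun J' => W i J' ω)) :
    ∀ (𝒦 : Finset (Fin K)) (i : Fin N),
      condEntropy μ (fun ω => fun J => W i J ω)
        (fun ω => fun (k : {x : Fin K // x ∈ 𝒦}) =>
          fun (iJ : {x : Fin N × Finset (Fin K) // (k : Fin K) ∈ x.2}) =>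
            W iJ.1.1 iJ.1.2 ω)
      = (1 - p) ^ 𝒦.card * entropy μ (fun ω => fun J => W i J ω) := by
  classical
  intro 𝒦 i
  set ι₀ := Fin N × Finset (Fin K)
  set PZ : ι₀ → Prop := fun iJ => ∃ k, k ∈ 𝒦 ∧ k ∈ iJ.2 with hPZ
  set Q : ι₀ → Prop := fun iJ => iJ.1 = i ∨ PZ iJ with hQ
  set fZ : (∀ j : Subtype PZ, V j.1.1 j.1.2) →
      (∀ k : {x : Fin K // x ∈ 𝒦}, ∀ iJ : {x : ι₀ // (k : Fin K) ∈ x.2}, V iJ.1.1 iJ.1.2) :=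
    fun t k iJ => t ⟨iJ.1, ⟨k.1, k.2, iJ.2⟩⟩ with hfZ
  have hfZinj : Function.Injective fZ := by
    intro t t' h
    funext x
    obtain ⟨⟨i', J'⟩, hx⟩ := x
    obtain ⟨k, hk1, hk2⟩ := hx
    exact congrFun (congrFun h ⟨k, hk1⟩) ⟨(i', J'), hk2⟩
  set fg : (∀ j : Subtype Q, V j.1.1 j.1.2) →
      ((∀ J, V i J) ×
        (∀ k : {x : Fin K // x ∈ 𝒦}, ∀ iJ : {x : ι₀ // (k : Fin K) ∈ x.2}, V iJ.1.1 iJ.1.2)) :=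
    fun t => (fun J => t ⟨(i, J), Or.inl rfl⟩,
      fun k iJ => t ⟨iJ.1, Or.inr ⟨k.1, k.2, iJ.2⟩⟩) with hfg
  have hfginj : Function.Injective fg := by
    intro t t' h
    have h1 := congrArg Prod.fst h
    have h2 := congrArg Prod.snd h
    funext x
    obtain ⟨⟨i', J'⟩, hx⟩ := x
    rcases hx with h1' | hPZ'
    · cases h1'
      exact congrFun h1 J'
    · obtain ⟨k, hk1, hk2⟩ := hPZ'
      exact congrFun (congrFun h2 ⟨k, hk1⟩) ⟨(i', J'), hk2⟩
  have e1Z := entropy_comp_injective μ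
    (fun ω' => fun j : Subtype PZ => W j.1.1 j.1.2 ω') fZ hfZinj
  have e2Z := entropy_restrict μ (fun iJ : ι₀ => W iJ.1 iJ.2) (fun iJ => hWmeas iJ.1 iJ.2)
    hindep PZ
  have hZ := e1Z.trans e2Z
  have e1Q := entropy_comp_injective μ
    (fun ω' => fun j : Subtype Q => W j.1.1 j.1.2 ω') fg hfginj
  have e2Q := entropy_restrict μ (fun iJ : ι₀ => W iJ.1 iJ.2) (fun iJ => hWmeas iJ.1 iJ.2)
    hindep Q
  have hWZ := e1Q.trans e2Q
  rw [condEntropy, hWZ, hZ]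
  have hsplit := Finset.sum_filter_add_sum_filter_not (Finset.univ.filter Q) PZ
    (fun j => entropy μ (W j.1 j.2))
  have hfil1 : (Finset.univ.filter Q).filter PZ = Finset.univ.filter PZ := by
    ext j
    simp only [Finset.mem_filter, Finset.mem_univ, true_and]
    exact ⟨fun h => h.2, fun h => ⟨Or.inr h, h⟩⟩
  have hfil2 : (Finset.univ.filter Q).filter (fun j => ¬ PZ j)
      = Finset.univ.filter (fun j : ι₀ => j.1 = i ∧ ¬ PZ j) := by
    ext j
    simp only [Finset.mem_filter, Finset.mem_univ, true_and]
    constructor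
    · rintro ⟨hq, hn⟩
      rcases (show j.1 = i ∨ PZ j from hq) with h | h
      · exact ⟨h, hn⟩
      · exact absurd h hn
    · rintro ⟨h1, h2⟩
      exact ⟨Or.inl h1, h2⟩
  rw [hfil1, hfil2] at hsplit
  rw [← hsplit, add_sub_cancel_left]
  have hre : ∑ j ∈ Finset.univ.filter (fun j : ι₀ => j.1 = i ∧ ¬ PZ j),
        entropy μ (W j.1 j.2)
      = ∑ J ∈ Finset.univ.filter (fun J : Finset (Fin K) => ∀ k ∈ 𝒦, k ∉ J),
        entropy μ (W i J) := by
    refine Finset.sum_nbij' (i := fun j : ι₀ => j.2) (j := fun J => (i, J))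
      ?_ ?_ ?_ ?_ ?_
    · intro a ha
      rw [Finset.mem_filter] at ha ⊢
      exact ⟨Finset.mem_univ _, fun k hk hkJ => ha.2.2 ⟨k, hk, hkJ⟩⟩
    · intro a ha
      rw [Finset.mem_filter] at ha ⊢
      refine ⟨Finset.mem_univ _, rfl, fun h => ?_⟩
      obtain ⟨k, hk, hkJ⟩ := h
      exact ha.2 k hk hkJ
    · intro a ha
      rw [Finset.mem_filter] at ha
      exact Prod.ext ha.2.1.symm rfl
    · intro a _
      rfl
    · intro a ha
      rw [Finset.mem_filter] at ha
      rw [ha.2.1]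
  rw [hre]
  have hc := sum_powerset_coeff (K := K) p 𝒦
  calc ∑ J ∈ Finset.univ.filter (fun J : Finset (Fin K) => ∀ k ∈ 𝒦, k ∉ J),
        entropy μ (W i J)
      = ∑ J ∈ Finset.univ.filter (fun J : Finset (Fin K) => ∀ k ∈ 𝒦, k ∉ J),
        p ^ J.card * (1 - p) ^ (K - J.card) * entropy μ (fun ω => fun J' => W i J' ω) :=
        Finset.sum_congr rfl fun J _ => hsize i J
    _ = (∑ J ∈ Finset.univ.filter (fun J : Finset (Fin K) => ∀ k ∈ 𝒦, k ∉ J),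
        p ^ J.card * (1 - p) ^ (K - J.card)) * entropy μ (fun ω => fun J' => W i J' ω) := by
        rw [Finset.sum_mul]
    _ = (1 - p) ^ 𝒦.card * entropy μ (fun ω => fun J' => W i J' ω) := by rw [hc]
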